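/- arXiv:2305.18806 — 3 statements merged into one kernel-verified Lean document; each statement's English description precedes it below -/
import Mathlib

section
/- Let k be a symmetric positive semidefinite kernel, X a finite set of points with invertible Gram matrix, and x₀ ∈ X. Then the posterior variance at x* given all of X equals the posterior variance at x* of the process first conditioned on {x₀} and then conditioned on X \ {x₀}; consequently σ(H_X)(x*) ≤ σ(H_{{x₀}})(x*). -/
open Matrix

set_option maxHeartbeats 1000000

private lemma sum_split {N : ℕ} (j : Fin N) (f : Fin N → ℝ) :
    ∑ i, f i = f j + ∑ a : {i : Fin N // i ≠ j}, f a.val := by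
  rw [Fintype.sum_eq_add_sum_compl j f]
  congr 1
  rw [Finset.sum_subtype (p := fun i => i ≠ j)]
  intro i; simp

private lemma psd_unit_posDef {N : Type*} [Fintype N] [DecidableEq N] {A : Matrix N N ℝ}
    (h : A.PosSemidef) (hd : IsUnit A.det) : A.PosDef := by
  refine Matrix.PosDef.of_dotProduct_mulVec_pos h.1 fun z hz => ?_
  rcases lt_or_eq_of_le (h.dotProduct_mulVec_nonneg z) with hlt | heq
  · exact hlt
  · exact absurd (Matrix.mulVec_injective_iff_isUnit.mpr
      ((Matrix.isUnit_iff_isUnit_det A).mpr hd)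
      (by rw [(h.dotProduct_mulVec_zero_iff z).mp heq.symm, Matrix.mulVec_zero] :
        A *ᵥ z = A *ᵥ 0)) hz

private lemma quad_aux {ι : Type*} [Fintype ι] (g z : ι → ℝ) (D : ι → ι → ℝ) (c : ℝ)
    (hc : c ≠ 0) :
    (-(∑ a, g a * z a) / c) * (c * (-(∑ a, g a * z a) / c) + ∑ a, g a * z a)
      + ∑ a, z a * (g a * (-(∑ a, g a * z a) / c) + ∑ b, D a b * z b)
    = ∑ a, z a * ∑ b, (D a b - g a * g b / c) * z b := by
  have e1 : ∀ a, z a * (g a * (-(∑ a, g a * z a) / c) + ∑ b, D a b * z b)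
      = z a * ∑ b, D a b * z b - g a / c * z a * ∑ b, g b * z b := by
    intro a; ring
  have e2 : ∀ a : ι, z a * ∑ b, (D a b - g a * g b / c) * z b
      = z a * ∑ b, D a b * z b - g a / c * z a * ∑ b, g b * z b := by
    intro a
    have h1 : ∑ b, (D a b - g a * g b / c) * z b
        = ∑ b, (D a b * z b - g a / c * (g b * z b)) :=
      Finset.sum_congr rfl fun b _ => by ring
    rw [h1, Finset.sum_sub_distrib, ← Finset.mul_sum]
    ring
  simp only [e1, e2]
  have h0 : c * (-(∑ a, g a * z a) / c) + ∑ a, g a * z a = 0 := by field_simp; ring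
  rw [h0, mul_zero, zero_add]

/-- Decomposition of GP conditioning: the posterior variance at `x*` given all points of
`X` equals the posterior variance at `x*` of the process first conditioned on `{x₀}`
(with the conditioned kernel `k'(a,b) = k(a,b) - k(a,x₀)k(x₀,b)/k(x₀,x₀)`) and then
conditioned on `X \ {x₀}`; consequently `σ(H_X)(x*) ≤ σ(H_{x₀})(x*)`. -/
theorem stmt7 {m n : ℕ} (k : (Fin m → ℝ) → (Fin m → ℝ) → ℝ)
    (hsymm : ∀ x y, k x y = k y x)
    (hpsd : ∀ (N : ℕ) (x : Fin N → (Fin m → ℝ)),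
      (Matrix.of fun i j => k (x i) (x j)).PosSemidef)
    (x : Fin n → (Fin m → ℝ)) (j : Fin n)
    (hGram : IsUnit (Matrix.of fun i i' => k (x i) (x i')).det)
    (xs : Fin m → ℝ) :
    let k' : (Fin m → ℝ) → (Fin m → ℝ) → ℝ :=
      fun a b => k a b - k a (x j) * k (x j) b / k (x j) (x j)
    (k xs xs - (fun i => k xs (x i)) ⬝ᵥ
        (Matrix.of fun i i' => k (x i) (x i'))⁻¹ *ᵥ (fun i => k xs (x i)))
      = k' xs xs - (fun i : {i : Fin n // i ≠ j} => k' xs (x i)) ⬝ᵥ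
          (Matrix.of fun (a b : {i : Fin n // i ≠ j}) => k' (x a) (x b))⁻¹ *ᵥ
          (fun i : {i : Fin n // i ≠ j} => k' xs (x i))
    ∧ (k xs xs - (fun i => k xs (x i)) ⬝ᵥ
        (Matrix.of fun i i' => k (x i) (x i'))⁻¹ *ᵥ (fun i => k xs (x i)))
        ≤ k xs xs - (k xs (x j)) ^ 2 / k (x j) (x j) := by
  intro k'
  classical
  set K : Matrix (Fin n) (Fin n) ℝ := Matrix.of fun i i' => k (x i) (x i') with hKdef
  have hKpsd : K.PosSemidef := hpsd n x
  have hKpd : K.PosDef := psd_unit_posDef hKpsd hGram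
  have hc0 : 0 < k (x j) (x j) := by
    have h := hKpd.dotProduct_mulVec_pos (x := Pi.single j 1) (by
      intro h0
      simpa using congrFun h0 j)
    simpa [hKdef] using h
  have hcne : k (x j) (x j) ≠ 0 := ne_of_gt hc0
  set S : Matrix {i : Fin n // i ≠ j} {i : Fin n // i ≠ j} ℝ :=
    Matrix.of fun a b => k' (x ↑a) (x ↑b) with hSdef
  have hSentry : ∀ a b : {i : Fin n // i ≠ j},
      S a b = k (x a.val) (x b.val)
        - k (x a.val) (x j) * k (x j) (x b.val) / k (x j) (x j) := by
    intro a b; rfl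
  have hS' : ∀ a b : {i : Fin n // i ≠ j},
      S a b = k (x a.val) (x b.val)
        - k (x j) (x a.val) * k (x j) (x b.val) / k (x j) (x j) := by
    intro a b; rw [hSentry, hsymm (x a.val) (x j)]
  set E : ({i : Fin n // i ≠ j} → ℝ) → ℝ → (Fin n → ℝ) :=
    fun z t i => if h : i = j then t else z ⟨i, h⟩ with hEdef
  have hEj : ∀ z t, E z t j = t := by intro z t; simp [hEdef]
  have hEa : ∀ z t (a : {i : Fin n // i ≠ j}), E z t a.val = z a := by
    intro z t a; simp [hEdef, a.2]
  have hrow : ∀ (z : {i : Fin n // i ≠ j} → ℝ) (t : ℝ) (i : Fin n),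
      (K *ᵥ E z t) i
        = k (x i) (x j) * t + ∑ a : {i : Fin n // i ≠ j}, k (x i) (x a.val) * z a := by
    intro z t i
    show ∑ i', K i i' * E z t i' = _
    rw [sum_split j (fun i' => K i i' * E z t i')]
    congr 1
    · rw [hEj]; rfl
    · exact Finset.sum_congr rfl fun a _ => by rw [hEa]; rfl
  have hquad : ∀ z : {i : Fin n // i ≠ j} → ℝ,
      E z (-(∑ a : {i : Fin n // i ≠ j}, k (x j) (x a.val) * z a) / k (x j) (x j)) ⬝ᵥ
        K *ᵥ E z (-(∑ a : {i : Fin n // i ≠ j}, k (x j) (x a.val) * z a) / k (x j) (x j))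
      = z ⬝ᵥ S *ᵥ z := by
    intro z
    set t : ℝ := -(∑ a : {i : Fin n // i ≠ j}, k (x j) (x a.val) * z a) / k (x j) (x j)
      with htdef
    have hR : z ⬝ᵥ S *ᵥ z
        = ∑ a : {i : Fin n // i ≠ j}, z a * ∑ b : {i : Fin n // i ≠ j},
            (k (x a.val) (x b.val)
              - k (x j) (x a.val) * k (x j) (x b.val) / k (x j) (x j)) * z b := by
      simp only [dotProduct, mulVec, hS']
    have hL : E z t ⬝ᵥ K *ᵥ E z t
        = t * (k (x j) (x j) * t + ∑ a : {i : Fin n // i ≠ j}, k (x j) (x a.val) * z a)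
          + ∑ a : {i : Fin n // i ≠ j}, z a *
              (k (x j) (x a.val) * t
                + ∑ b : {i : Fin n // i ≠ j}, k (x a.val) (x b.val) * z b) := by
      show (∑ i, E z t i * (K *ᵥ E z t) i) = _
      rw [sum_split j (fun i => E z t i * (K *ᵥ E z t) i), hEj, hrow z t j]
      congr 1
      refine Finset.sum_congr rfl fun a _ => ?_
      rw [hEa, hrow z t a.val, hsymm (x a.val) (x j)]
    rw [hL, hR, htdef]
    exact quad_aux (fun a => k (x j) (x a.val)) z
      (fun a b => k (x a.val) (x b.val)) (k (x j) (x j)) hcne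
  have hSherm : S.IsHermitian := by
    ext a b
    simp only [conjTranspose_apply, star_trivial]
    rw [hSentry, hSentry, hsymm (x b.val) (x a.val), hsymm (x b.val) (x j),
      hsymm (x j) (x a.val)]
    ring
  have hSpd : S.PosDef := by
    refine Matrix.PosDef.of_dotProduct_mulVec_pos hSherm fun z hz => ?_
    have hne : E z (-(∑ a : {i : Fin n // i ≠ j}, k (x j) (x a.val) * z a)
        / k (x j) (x j)) ≠ 0 := by
      intro h0
      apply hz
      funext a
      have h1 := congrFun h0 a.val
      rw [hEa] at h1
      exact h1
    have h2 := hKpd.dotProduct_mulVec_pos hne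
    rw [star_trivial] at h2
    rw [star_trivial, ← hquad z]
    exact h2
  have hSdet : IsUnit S.det := isUnit_iff_ne_zero.mpr hSpd.det_pos.ne'
  haveI : Invertible S := S.invertibleOfIsUnitDet hSdet
  set v' : {i : Fin n // i ≠ j} → ℝ := fun a => k' xs (x ↑a) with hv'def
  set y : {i : Fin n // i ≠ j} → ℝ := S⁻¹ *ᵥ v' with hydef
  have hy : S *ᵥ y = v' := by
    rw [hydef, mulVec_mulVec, Matrix.mul_nonsing_inv _ hSdet, one_mulVec]
  set a₀ : ℝ := (k xs (x j) - ∑ a : {i : Fin n // i ≠ j}, k (x j) (x a.val) * y a)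
      / k (x j) (x j) with ha₀def
  have hKα : K *ᵥ E y a₀ = fun i => k xs (x i) := by
    funext i
    rw [hrow]
    by_cases hi : i = j
    · subst hi
      rw [ha₀def]
      field_simp
      ring
    · have hyb := congrFun hy ⟨i, hi⟩
      have hSy : (S *ᵥ y) ⟨i, hi⟩ = ∑ a : {i : Fin n // i ≠ j}, S ⟨i, hi⟩ a * y a := rfl
      have hterm : ∀ a : {i : Fin n // i ≠ j}, S ⟨i, hi⟩ a * y a
          = k (x i) (x a.val) * y a
            - k (x i) (x j) / k (x j) (x j) * (k (x j) (x a.val) * y a) := by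
        intro a; rw [hSentry]; ring
      have hexp : ∑ a : {i : Fin n // i ≠ j}, S ⟨i, hi⟩ a * y a
          = (∑ a : {i : Fin n // i ≠ j}, k (x i) (x a.val) * y a)
            - k (x i) (x j) / k (x j) (x j)
              * ∑ a : {i : Fin n // i ≠ j}, k (x j) (x a.val) * y a := by
        rw [Finset.sum_congr rfl fun a _ => hterm a, Finset.sum_sub_distrib, ← Finset.mul_sum]
      rw [hSy, hexp] at hyb
      have hv'b : v' ⟨i, hi⟩ = k xs (x i) - k xs (x j) * k (x j) (x i) / k (x j) (x j) := rfl
      rw [hv'b, hsymm (x j) (x i)] at hyb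
      rw [ha₀def]
      linear_combination hyb
  have hKinv : K⁻¹ *ᵥ (fun i => k xs (x i)) = E y a₀ := by
    rw [← hKα, mulVec_mulVec, Matrix.nonsing_inv_mul _ hGram, one_mulVec]
  have hdot : (fun i => k xs (x i)) ⬝ᵥ K⁻¹ *ᵥ (fun i => k xs (x i))
      = k xs (x j) * a₀ + ∑ a : {i : Fin n // i ≠ j}, k xs (x a.val) * y a := by
    rw [hKinv]
    show ∑ i, k xs (x i) * E y a₀ i = _
    rw [sum_split j (fun i => k xs (x i) * E y a₀ i), hEj]
    congr 1
    exact Finset.sum_congr rfl fun a _ => by rw [hEa]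
  have hdot' : v' ⬝ᵥ S⁻¹ *ᵥ v'
      = (∑ a : {i : Fin n // i ≠ j}, k xs (x a.val) * y a)
        - k xs (x j) / k (x j) (x j)
          * ∑ a : {i : Fin n // i ≠ j}, k (x j) (x a.val) * y a := by
    rw [← hydef]
    show ∑ a : {i : Fin n // i ≠ j}, v' a * y a = _
    have hterm : ∀ a : {i : Fin n // i ≠ j}, v' a * y a
        = k xs (x a.val) * y a
          - k xs (x j) / k (x j) (x j) * (k (x j) (x a.val) * y a) := by
      intro a
      have : v' a = k xs (x a.val) - k xs (x j) * k (x j) (x a.val) / k (x j) (x j) := rfl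
      rw [this]; ring
    rw [Finset.sum_congr rfl fun a _ => hterm a, Finset.sum_sub_distrib, ← Finset.mul_sum]
  have hk'xs : k' xs xs = k xs xs - k xs (x j) * k (x j) xs / k (x j) (x j) := rfl
  have keyeq : k xs xs - (fun i => k xs (x i)) ⬝ᵥ K⁻¹ *ᵥ (fun i => k xs (x i))
      = k' xs xs - v' ⬝ᵥ S⁻¹ *ᵥ v' := by
    rw [hdot, hdot', hk'xs, hsymm (x j) xs, ha₀def]
    field_simp
    ring
  refine ⟨keyeq, ?_⟩
  rw [keyeq, hk'xs, hsymm (x j) xs]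
  have hnn : 0 ≤ v' ⬝ᵥ S⁻¹ *ᵥ v' := by
    have hSinv : (S⁻¹).PosSemidef := hSpd.inv.posSemidef
    have h3 := hSinv.dotProduct_mulVec_nonneg v'
    rwa [star_trivial] at h3
  have hsq : k xs (x j) * k xs (x j) = k xs (x j) ^ 2 := by ring
  rw [hsq]
  linarith
end

section
/- GP posterior variance is monotone in the dataset: if X ⊆ X' are finite sets of points with invertible Gram matrices k(X,X) and k(X',X'), then for every x*, σ(H_{X'})(x*) ≤ σ(H_X)(x*), where σ(H_X)(x*) = k(x*,x*) - k(x*,X)ᵀ k(X,X)⁻¹ k(X,x*). -/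
open Matrix

/-- Monotonicity of GP posterior variance in the dataset: if `X ⊆ X'` (both with
invertible Gram matrices), then `σ(H_{X'})(x*) ≤ σ(H_X)(x*)`, where
`σ(H_X)(x*) = k(x*,x*) - k(x*,X)ᵀ k(X,X)⁻¹ k(X,x*)`. -/
theorem stmt8 {m n : ℕ} (k : (Fin m → ℝ) → (Fin m → ℝ) → ℝ)
    (hsymm : ∀ x y, k x y = k y x)
    (hpsd : ∀ (N : ℕ) (x : Fin N → (Fin m → ℝ)),
      (Matrix.of fun i j => k (x i) (x j)).PosSemidef)
    (x : Fin n → (Fin m → ℝ)) (s s' : Finset (Fin n)) (hss : s ⊆ s')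
    (hGram : IsUnit (Matrix.of fun (i i' : ↥s) => k (x i) (x i')).det)
    (hGram' : IsUnit (Matrix.of fun (i i' : ↥s') => k (x i) (x i')).det)
    (xs : Fin m → ℝ) :
    k xs xs - (fun i : ↥s' => k xs (x i)) ⬝ᵥ
        (Matrix.of fun (i i' : ↥s') => k (x i) (x i'))⁻¹ *ᵥ (fun i : ↥s' => k xs (x i))
      ≤ k xs xs - (fun i : ↥s => k xs (x i)) ⬝ᵥ
        (Matrix.of fun (i i' : ↥s) => k (x i) (x i'))⁻¹ *ᵥ (fun i : ↥s => k xs (x i)) := by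
  set K : Matrix ↥s ↥s ℝ := Matrix.of fun (i i' : ↥s) => k (x i) (x i') with hK
  set K' : Matrix ↥s' ↥s' ℝ := Matrix.of fun (i i' : ↥s') => k (x i) (x i') with hK'
  set v : ↥s → ℝ := fun i => k xs (x i) with hv
  set v' : ↥s' → ℝ := fun i => k xs (x i) with hv'
  -- K' is positive semidefinite
  have hK'psd : K'.PosSemidef := by
    have h := (hpsd s'.card (x ∘ fun i => ((s'.equivFin).symm i : Fin n))).submatrix s'.equivFin
    have : (Matrix.of fun i j => k ((x ∘ fun i => ((s'.equivFin).symm i : Fin n)) i)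
        ((x ∘ fun i => ((s'.equivFin).symm i : Fin n)) j)).submatrix s'.equivFin s'.equivFin = K' := by
      ext i j
      simp [Matrix.submatrix_apply, hK']
    rwa [this] at h
  have hK'symm : K'ᵀ = K' := by
    ext i j
    simp [hK', Matrix.transpose_apply, hsymm]
  -- inclusion map
  set ι : ↥s → ↥s' := fun i => ⟨i.1, hss i.2⟩ with hι
  have hιinj : Function.Injective ι := by
    intro a b h
    rwa [hι, Subtype.mk.injEq, ← Subtype.ext_iff] at h
  set w : ↥s → ℝ := K⁻¹ *ᵥ v with hw
  set w' : ↥s' → ℝ := fun j => if h : j.1 ∈ s then w ⟨j.1, h⟩ else 0 with hw'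
  set u' : ↥s' → ℝ := K'⁻¹ *ᵥ v' with hu'
  have hKw : K *ᵥ w = v := by
    rw [hw, Matrix.mulVec_mulVec, Matrix.mul_nonsing_inv _ hGram, Matrix.one_mulVec]
  have hK'u : K' *ᵥ u' = v' := by
    rw [hu', Matrix.mulVec_mulVec, Matrix.mul_nonsing_inv _ hGram', Matrix.one_mulVec]
  -- sums of functions supported on s
  have hsum : ∀ f : ↥s' → ℝ, (∑ j : ↥s', w' j * f j) = ∑ i : ↥s, w i * f (ι i) := by
    intro f
    rw [← Finset.sum_subset (Finset.subset_univ (Finset.univ.image ι))]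
    · rw [Finset.sum_image (fun a _ b _ h => hιinj h)]
      refine Finset.sum_congr rfl fun i _ => ?_
      have : w' (ι i) = w i := by simp [hw', hι]
      rw [this]
    · intro j _ hj
      have hjs : (j : Fin n) ∉ s := by
        intro h
        exact hj (Finset.mem_image.mpr ⟨⟨j.1, h⟩, Finset.mem_univ _, Subtype.ext rfl⟩)
      simp [hw', hjs]
  have h1 : w' ⬝ᵥ v' = w ⬝ᵥ v := by
    rw [dotProduct, dotProduct, hsum (fun j => v' j)]
  have h2 : w' ⬝ᵥ (K' *ᵥ w') = w ⬝ᵥ v := by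
    simp only [dotProduct]
    rw [hsum (fun j => (K' *ᵥ w') j)]
    have : ∀ i : ↥s, (K' *ᵥ w') (ι i) = v i := by
      intro i
      have : (K' *ᵥ w') (ι i) = ∑ j : ↥s', w' j * K' (ι i) j := by
        rw [Matrix.mulVec, dotProduct]
        exact Finset.sum_congr rfl fun j _ => mul_comm _ _
      rw [this, hsum (fun j => K' (ι i) j)]
      have : ∀ i' : ↥s, K' (ι i) (ι i') = K i i' := fun i' => rfl
      calc ∑ i' : ↥s, w i' * K' (ι i) (ι i')
          = ∑ i' : ↥s, K i i' * w i' := by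
            exact Finset.sum_congr rfl fun i' _ => by rw [this i', mul_comm]
        _ = (K *ᵥ w) i := rfl
        _ = v i := by rw [hKw]
      -- done
    rw [Finset.sum_congr rfl fun i _ => by rw [this i]]
  -- the PSD inequality
  have hpos : 0 ≤ (w' - u') ⬝ᵥ (K' *ᵥ (w' - u')) := by
    have := hK'psd.dotProduct_mulVec_nonneg (w' - u')
    simpa using this
  have hexp : (w' - u') ⬝ᵥ (K' *ᵥ (w' - u'))
      = v' ⬝ᵥ (K'⁻¹ *ᵥ v') - w ⬝ᵥ v := by
    have huKw : u' ⬝ᵥ (K' *ᵥ w') = v' ⬝ᵥ w' := by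
      rw [Matrix.dotProduct_mulVec]
      have : u' ᵥ* K' = v' := by
        rw [← hK'symm, Matrix.vecMul_transpose, hK'u]
      rw [this]
    have huv : u' ⬝ᵥ v' = v' ⬝ᵥ (K'⁻¹ *ᵥ v') := by
      rw [hu', dotProduct_comm]
    rw [Matrix.mulVec_sub, dotProduct_sub, sub_dotProduct,
      sub_dotProduct, hK'u, huKw, huv, h2, h1,
      dotProduct_comm v' w', h1]
    ring
  have hwv : w ⬝ᵥ v = v ⬝ᵥ (K⁻¹ *ᵥ v) := by
    rw [hw, dotProduct_comm]
  have : v ⬝ᵥ (K⁻¹ *ᵥ v) ≤ v' ⬝ᵥ (K'⁻¹ *ᵥ v') := by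
    rw [hexp, hwv] at hpos
    linarith
  linarith
end

section
/- Let k be a continuous symmetric positive semidefinite kernel on a compact set S ⊆ ℝᵐ with k(x,x) > 0 for all x ∈ S, and let (xₙ) be a sequence of points whose closure contains the support of a point x* (i.e., x* is a limit point of (xₙ)). Then the posterior variances σ(H_{X_N})(x*) given X_N = {x₁,…,x_N} (assuming invertible Gram matrices) converge to 0 as N → ∞. -/
open Matrix Filter

theorem quadB {m N : ℕ} (k : (Fin m → ℝ) → (Fin m → ℝ) → ℝ)
    (hpsd : ∀ (N : ℕ) (x : Fin N → (Fin m → ℝ)),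
      (Matrix.of fun i j => k (x i) (x j)).PosSemidef)
    (hsymm : ∀ x y, k x y = k y x)
    (xs : Fin m → ℝ) (x : Fin N → (Fin m → ℝ)) (b : Fin N → ℝ) :
    0 ≤ k xs xs - 2 * ((fun i => k xs (x i)) ⬝ᵥ b)
      + b ⬝ᵥ ((Matrix.of fun i j => k (x i) (x j)) *ᵥ b) := by
  have h := (hpsd (N+1) (Fin.cons xs x)).dotProduct_mulVec_nonneg (Fin.cons 1 (-b))
  simp only [star_trivial] at h
  simp only [dotProduct, mulVec, Fin.sum_univ_succ, Fin.cons_zero, Fin.cons_succ,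
    Matrix.of_apply, Pi.neg_apply] at h ⊢
  have hs : ∀ i, k (x i) xs = k xs (x i) := fun i => hsymm _ _
  simp only [hs, neg_mul, mul_add, mul_neg, neg_neg, mul_one, one_mul,
    Finset.sum_add_distrib, Finset.sum_neg_distrib, Finset.mul_sum] at h ⊢
  ring_nf at h ⊢
  have e1 : ∑ i, b i * k xs (x i) = ∑ i, k xs (x i) * b i :=
    Finset.sum_congr rfl (fun i _ => mul_comm _ _)
  have e2 : ∑ i, 2 * k xs (x i) * b i = 2 * ∑ i, k xs (x i) * b i := by
    rw [Finset.mul_sum]; exact Finset.sum_congr rfl (fun i _ => by ring)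
  have e3 : ∑ i, k xs (x i) * b i * 2 = 2 * ∑ i, k xs (x i) * b i := by
    rw [Finset.mul_sum]; exact Finset.sum_congr rfl (fun i _ => by ring)
  linarith [h]

theorem keyA {N : ℕ} (K : Matrix (Fin N) (Fin N) ℝ) (hK : K.PosSemidef)
    (hdet : IsUnit K.det) (κ c : Fin N → ℝ) :
    2 * (κ ⬝ᵥ c) - c ⬝ᵥ (K *ᵥ c) ≤ κ ⬝ᵥ K⁻¹ *ᵥ κ := by
  set a := K⁻¹ *ᵥ κ with ha
  have hKa : K *ᵥ a = κ := by
    rw [ha, mulVec_mulVec, mul_nonsing_inv _ hdet, one_mulVec]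
  have hKT : Kᵀ = K := by
    rw [← conjTranspose_eq_transpose_of_trivial]; exact hK.1
  have h := hK.dotProduct_mulVec_nonneg (c - a)
  simp only [star_trivial] at h
  have hexp : (c - a) ⬝ᵥ K *ᵥ (c - a)
      = c ⬝ᵥ (K *ᵥ c) - κ ⬝ᵥ c - κ ⬝ᵥ c + κ ⬝ᵥ a := by
    rw [mulVec_sub, dotProduct_sub, sub_dotProduct, sub_dotProduct, hKa]
    have h1 : a ⬝ᵥ K *ᵥ c = κ ⬝ᵥ c := by
      rw [dotProduct_mulVec, ← hKT, vecMul_transpose, hKa]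
    have h2 : c ⬝ᵥ κ = κ ⬝ᵥ c := dotProduct_comm _ _
    have h3 : a ⬝ᵥ κ = κ ⬝ᵥ a := dotProduct_comm _ _
    rw [h1, h2, h3]; ring
  rw [hexp] at h
  linarith [h]

/-- Vanishing posterior variance at in-distribution points: for a continuous symmetric
PSD kernel on a compact set `S` with positive diagonal, if `x*` is a limit point of the
sequence of data points `(xₙ) ⊆ S` (and all Gram matrices are invertible), then the
GP posterior variances `σ(H_{X_N})(x*)` converge to `0` as `N → ∞`. -/
theorem stmt9 {m : ℕ} (S : Set (Fin m → ℝ)) (hS : IsCompact S)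
    (k : (Fin m → ℝ) → (Fin m → ℝ) → ℝ)
    (hcont : ContinuousOn (fun p : (Fin m → ℝ) × (Fin m → ℝ) => k p.1 p.2) (S ×ˢ S))
    (hsymm : ∀ x y, k x y = k y x)
    (hpsd : ∀ (N : ℕ) (x : Fin N → (Fin m → ℝ)),
      (Matrix.of fun i j => k (x i) (x j)).PosSemidef)
    (hpos : ∀ x ∈ S, 0 < k x x)
    (x : ℕ → (Fin m → ℝ)) (hx : ∀ i, x i ∈ S)
    (xs : Fin m → ℝ) (hxs : xs ∈ S)
    (hlim : ∀ δ > 0, ∀ N : ℕ, ∃ i ≥ N, dist (x i) xs < δ)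
    (hGram : ∀ N : ℕ, IsUnit (Matrix.of fun (i i' : Fin N) => k (x i) (x i')).det) :
    Tendsto (fun N : ℕ =>
        k xs xs - (fun i : Fin N => k xs (x i)) ⬝ᵥ
          (Matrix.of fun (i i' : Fin N) => k (x i) (x i'))⁻¹ *ᵥ
          (fun i : Fin N => k xs (x i)))
      atTop (nhds 0) := by
  -- notation
  set K : ∀ N : ℕ, Matrix (Fin N) (Fin N) ℝ :=
    fun N => Matrix.of fun (i i' : Fin N) => k (x i) (x i') with hK
  set κ : ∀ N : ℕ, Fin N → ℝ := fun N i => k xs (x i) with hκ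
  set v : ℕ → ℝ := fun N => k xs xs - κ N ⬝ᵥ (K N)⁻¹ *ᵥ κ N with hv
  have hKpsd : ∀ N, (K N).PosSemidef := fun N => hpsd N (fun i : Fin N => x i)
  -- nonnegativity of v N
  have hv0 : ∀ N, 0 ≤ v N := by
    intro N
    have hKa : K N *ᵥ ((K N)⁻¹ *ᵥ κ N) = κ N := by
      rw [mulVec_mulVec, mul_nonsing_inv _ (hGram N), one_mulVec]
    have hq := quadB k hpsd hsymm xs (fun i : Fin N => x i) ((K N)⁻¹ *ᵥ κ N)
    have h1 : (fun i : Fin N => k xs (x i)) ⬝ᵥ ((K N)⁻¹ *ᵥ κ N)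
        = κ N ⬝ᵥ (K N)⁻¹ *ᵥ κ N := rfl
    have h2 : ((K N)⁻¹ *ᵥ κ N) ⬝ᵥ ((Matrix.of fun (i j : Fin N) => k (x i) (x j)) *ᵥ ((K N)⁻¹ *ᵥ κ N))
        = κ N ⬝ᵥ (K N)⁻¹ *ᵥ κ N := by
      have : (Matrix.of fun (i j : Fin N) => k (x i) (x j)) *ᵥ ((K N)⁻¹ *ᵥ κ N) = κ N := hKa
      rw [this, dotProduct_comm]
    rw [h1, h2] at hq
    simp only [hv]
    linarith [hq]
  -- upper bound by ψ at any data point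
  have hub : ∀ N : ℕ, ∀ j : Fin N,
      v N ≤ k xs xs - (k xs (x j))^2 / k (x j) (x j) := by
    intro N j
    have hKjj : 0 < k (x j) (x j) := hpos _ (hx j)
    set t : ℝ := k xs (x j) / k (x j) (x j) with ht
    set c : Fin N → ℝ := Pi.single j t with hc
    have hA := keyA (K N) (hKpsd N) (hGram N) (κ N) c
    have h1 : κ N ⬝ᵥ c = k xs (x j) * t := by
      simp [hc, hκ, dotProduct_single]
    have h2 : c ⬝ᵥ (K N *ᵥ c) = t * (k (x j) (x j) * t) := by
      have hKc : K N *ᵥ c = fun i => K N i j * t := by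
        ext i
        simp [hc, mulVec, dotProduct, Pi.single_apply, Finset.sum_ite_eq',
          mul_comm]
      rw [hKc]
      simp [hc, hK, dotProduct, Pi.single_apply, Finset.sum_ite_eq']
    rw [h1, h2] at hA
    have heq : 2 * (k xs (x j) * t) - t * (k (x j) (x j) * t)
        = (k xs (x j))^2 / k (x j) (x j) := by
      rw [ht]; field_simp; ring
    rw [heq] at hA
    simp only [hv]
    linarith [hA]
  -- continuity of ψ at xs within S
  have hc1 : ContinuousWithinAt (fun y => k xs y) S xs := by
    have h := hcont.comp ((continuous_const.prodMk continuous_id).continuousOn)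
      (fun y hy => Set.mk_mem_prod hxs hy)
    exact h.continuousWithinAt hxs
  have hc2 : ContinuousWithinAt (fun y => k y y) S xs := by
    have h := hcont.comp ((continuous_id.prodMk continuous_id).continuousOn)
      (fun y hy => Set.mk_mem_prod hy hy)
    exact h.continuousWithinAt hxs
  have hkne : k xs xs ≠ 0 := ne_of_gt (hpos xs hxs)
  have hψ : ContinuousWithinAt (fun y => k xs xs - (k xs y)^2 / k y y) S xs :=
    continuousWithinAt_const.sub ((hc1.pow 2).div hc2 hkne)
  have hψ0 : (fun y => k xs xs - (k xs y)^2 / k y y) xs = 0 := by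
    field_simp
    ring
  -- finish
  rw [Metric.tendsto_atTop]
  intro ε hε
  have htend : Tendsto (fun y => k xs xs - (k xs y)^2 / k y y) (nhdsWithin xs S) (nhds 0) := by
    rw [← hψ0]; exact hψ
  have hmem : {y | k xs xs - (k xs y)^2 / k y y < ε} ∈ nhdsWithin xs S :=
    htend (Iio_mem_nhds hε)
  rw [Metric.mem_nhdsWithin_iff] at hmem
  obtain ⟨δ, hδ, hball⟩ := hmem
  obtain ⟨i₀, -, hdi₀⟩ := hlim δ hδ 0
  refine ⟨i₀ + 1, fun N hN => ?_⟩
  have hj : (i₀ : ℕ) < N := by omega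
  have hfi : k xs xs - (k xs (x i₀))^2 / k (x i₀) (x i₀) < ε := by
    apply hball
    exact ⟨Metric.mem_ball.mpr hdi₀, hx i₀⟩
  have hle := hub N ⟨i₀, hj⟩
  have : v N < ε := lt_of_le_of_lt hle hfi
  have h0 := hv0 N
  rw [Real.dist_eq]
  have : |v N - 0| = v N := by rw [sub_zero, abs_of_nonneg h0]
  rw [this]
  exact lt_of_le_of_lt hle hfi
end
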